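/- Let n ≥ 2 and γ > 0 with p := γ·(ln n)/n ≤ 1. Consider the random graph G on vertex set {1,...,n} in which each of the C(n,2) possible edges is present independently with probability p, and let Δ(G) denote the maximum vertex degree of G. Then Pr[Δ(G) ≥ 2γ·ln n] ≤ n^(1−γ/4). -/

import Mathlib

open Finset

noncomputable section

/-- The set of ordered pairs `(i, j)` with `i < j` in `Fin n`, indexing potential edges. -/
abbrev Pairs (n : ℕ) := {q : Fin n × Fin n // q.1 < q.2}

/-- The probability of the edge configuration `ω`: each edge is present independently
with probability `p`. -/
def graphWeight (n : ℕ) (p : ℝ) (ω : Pairs n → Bool) : ℝ :=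
  ∏ e : Pairs n, if ω e then p else 1 - p

/-- `X_{kj}` for arbitrary vertices `k ≠ j` (symmetrised edge indicator). -/
def edgeInd {n : ℕ} (ω : Pairs n → Bool) (k j : Fin n) : Bool :=
  if h : k < j then ω ⟨(k, j), h⟩ else if h' : j < k then ω ⟨(j, k), h'⟩ else false

/-- The degree of vertex `k` in the graph with edge configuration `ω`. -/
def deg {n : ℕ} (ω : Pairs n → Bool) (k : Fin n) : ℕ :=
  (Finset.univ.filter (fun j => edgeInd ω k j = true)).card

/-- The maximum degree of the graph with edge configuration `ω`. -/
def maxDeg {n : ℕ} (ω : Pairs n → Bool) : ℕ :=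
  Finset.univ.sup (deg ω)

/-- sum over a union is at most the sum of sums, for nonneg functions. -/
lemma sum_union_le_nonneg {α : Type*} [DecidableEq α] (f : α → ℝ) (hf : ∀ x, 0 ≤ f x)
    (A B : Finset α) : ∑ x ∈ A ∪ B, f x ≤ ∑ x ∈ A, f x + ∑ x ∈ B, f x := by
  have h := Finset.sum_union_inter (s₁ := A) (s₂ := B) (f := f)
  have h2 : 0 ≤ ∑ x ∈ A ∩ B, f x := Finset.sum_nonneg fun x _ => hf x
  linarith

lemma sum_biUnion_le_nonneg {ι α : Type*} [DecidableEq α] (f : α → ℝ) (hf : ∀ x, 0 ≤ f x)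
    (s : Finset ι) (t : ι → Finset α) :
    ∑ x ∈ s.biUnion t, f x ≤ ∑ i ∈ s, ∑ x ∈ t i, f x := by
  classical
  induction s using Finset.induction_on with
  | empty => simp
  | insert _ _ ha ih =>
    rename_i a s
    rw [Finset.biUnion_insert, Finset.sum_insert ha]
    exact (sum_union_le_nonneg f hf _ _).trans (by linarith)

/-- pairs touching k -/
def touch {n : ℕ} (k : Fin n) (e : Pairs n) : Prop := e.1.1 = k ∨ e.1.2 = k

instance {n : ℕ} (k : Fin n) (e : Pairs n) : Decidable (touch k e) := by
  unfold touch; infer_instance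

lemma deg_eq_card_touch {n : ℕ} (ω : Pairs n → Bool) (k : Fin n) :
    deg ω k = (Finset.univ.filter (fun e : Pairs n => touch k e ∧ ω e = true)).card := by
  classical
  unfold deg
  apply Finset.card_bij
    (fun j hj => if h : k < j then (⟨(k, j), h⟩ : Pairs n) else
      ⟨(j, k), by
        simp only [Finset.mem_filter] at hj
        by_contra h'
        have hjk : ¬ j < k := h'
        simp [edgeInd, h, hjk] at hj⟩)
  · intro j hj
    simp only [Finset.mem_filter, Finset.mem_univ, true_and] at hj ⊢
    by_cases h : k < j
    · simp only [dif_pos h]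
      refine ⟨Or.inl rfl, ?_⟩
      simpa [edgeInd, h] using hj
    · simp only [dif_neg h]
      have hjk : j < k := by
        by_contra h'
        simp [edgeInd, h, h'] at hj
      refine ⟨Or.inr rfl, ?_⟩
      simpa [edgeInd, h, hjk] using hj
  · intro j1 h1 j2 h2 heq
    have hval := congrArg Subtype.val heq
    rcases lt_or_ge k j1 with ha | ha <;> rcases lt_or_ge k j2 with hb | hb <;>
      [rw [dif_pos ha, dif_pos hb] at hval;
       rw [dif_pos ha, dif_neg (not_lt.2 hb)] at hval;
       rw [dif_neg (not_lt.2 ha), dif_pos hb] at hval;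
       rw [dif_neg (not_lt.2 ha), dif_neg (not_lt.2 hb)] at hval] <;>
      (simp only [Prod.mk.injEq, Fin.ext_iff] at hval ⊢; omega)
  · intro e he
    simp only [Finset.mem_filter, Finset.mem_univ, true_and] at he
    obtain ⟨htc, hω⟩ := he
    rcases htc with h1 | h2
    · have hlt : k < e.1.2 := h1 ▸ e.2
      have hee : (⟨(k, e.1.2), hlt⟩ : Pairs n) = e :=
        Subtype.ext (show (k, e.1.2) = e.1 by rw [← h1])
      refine ⟨e.1.2, ?_, ?_⟩
      · simp only [Finset.mem_filter, Finset.mem_univ, true_and]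
        simp only [edgeInd, dif_pos hlt]
        rw [hee]; exact hω
      · rw [dif_pos hlt]; exact hee
    · have hlt : e.1.1 < k := h2 ▸ e.2
      have hnk : ¬ k < e.1.1 := not_lt.2 hlt.le
      have hee : (⟨(e.1.1, k), hlt⟩ : Pairs n) = e :=
        Subtype.ext (show (e.1.1, k) = e.1 by rw [← h2])
      refine ⟨e.1.1, ?_, ?_⟩
      · simp only [Finset.mem_filter, Finset.mem_univ, true_and]
        simp only [edgeInd, dif_neg hnk,
          dif_pos hlt]
        rw [hee]; exact hω
      · rw [dif_neg hnk]; exact hee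

lemma card_touch_le {n : ℕ} (k : Fin n) :
    (Finset.univ.filter (fun e : Pairs n => touch k e)).card ≤ n := by
  classical
  have := Finset.card_le_card_of_injOn
    (f := fun e : Pairs n => if e.1.1 = k then e.1.2 else e.1.1)
    (s := Finset.univ.filter (fun e : Pairs n => touch k e))
    (t := (Finset.univ : Finset (Fin n)))
    (fun e _ => Finset.mem_univ _) ?_
  · simpa using this
  · intro e he e' he' heq
    simp only [Finset.coe_filter, Set.mem_setOf_eq, Finset.mem_univ, true_and] at he he'
    simp only at heq
    rcases he with h1 | h2 <;> rcases he' with h1' | h2'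
    · rw [if_pos h1, if_pos h1'] at heq
      exact Subtype.ext (Prod.ext_iff.mpr ⟨h1.trans h1'.symm, heq⟩)
    · have hlt : k < e.1.2 := h1 ▸ e.2
      have hlt' : e'.1.1 < k := h2' ▸ e'.2
      have hne' : e'.1.1 ≠ k := hlt'.ne
      rw [if_pos h1, if_neg hne'] at heq
      exact absurd heq (lt_trans hlt' hlt).ne'
    · have hlt : e.1.1 < k := h2 ▸ e.2
      have hlt' : k < e'.1.2 := h1' ▸ e'.2
      have hne : e.1.1 ≠ k := hlt.ne
      rw [if_neg hne, if_pos h1'] at heq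
      exact absurd heq (lt_trans hlt hlt').ne
    · have hlt : e.1.1 < k := h2 ▸ e.2
      have hlt' : e'.1.1 < k := h2' ▸ e'.2
      rw [if_neg hlt.ne, if_neg hlt'.ne] at heq
      exact Subtype.ext (Prod.ext_iff.mpr ⟨heq, h2.trans h2'.symm⟩)

lemma expo_aux {γ : ℝ} (hγ : 0 < γ) : (1:ℝ) + γ - 2 * γ * Real.log 2 ≤ 1 - γ / 4 := by
  have h := Real.log_two_gt_d9
  nlinarith

lemma graphWeight_nonneg {n : ℕ} {p : ℝ} (hp0 : 0 ≤ p) (hp1 : p ≤ 1) (ω : Pairs n → Bool) :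
    0 ≤ graphWeight n p ω :=
  Finset.prod_nonneg fun e _ => by split <;> linarith

lemma moment_eq {n : ℕ} (p : ℝ) (k : Fin n) :
    ∑ ω : Pairs n → Bool, graphWeight n p ω * 2 ^ (deg ω k)
      = ∏ e : Pairs n, (if touch k e then 1 + p else 1) := by
  classical
  set g : Pairs n → Bool → ℝ :=
    fun e b => (if b then p else 1 - p) * (if touch k e ∧ b = true then 2 else 1) with hg
  have key : ∑ ω : Pairs n → Bool, ∏ e : Pairs n, g e (ω e) = ∏ e : Pairs n, ∑ b : Bool, g e b :=
    (Fintype.prod_sum g).symm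
  have h1 : ∀ ω : Pairs n → Bool, graphWeight n p ω * 2 ^ (deg ω k)
      = ∏ e : Pairs n, g e (ω e) := by
    intro ω
    rw [hg]
    rw [Finset.prod_mul_distrib, deg_eq_card_touch]
    congr 1
    rw [← Finset.prod_const, Finset.prod_filter]
  rw [Finset.sum_congr rfl fun ω _ => h1 ω, key]
  apply Finset.prod_congr rfl
  intro e _
  rw [Fintype.sum_bool]
  by_cases ht : touch k e <;> simp [hg, ht] <;> ring

theorem maxDeg_tail_bound (n : ℕ) (hn : 2 ≤ n) (γ : ℝ) (hγ : 0 < γ)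
    (hp1 : γ * Real.log n / n ≤ 1) :
    ∑ ω ∈ (Finset.univ : Finset (Pairs n → Bool)).filter
        (fun ω => 2 * γ * Real.log n ≤ (maxDeg ω : ℝ)),
      graphWeight n (γ * Real.log n / n) ω
      ≤ (n : ℝ) ^ ((1 : ℝ) - γ / 4) := by
  classical
  set p : ℝ := γ * Real.log n / n with hp
  set t : ℝ := 2 * γ * Real.log n with ht
  have hn0 : (0:ℝ) < n := by positivity
  have hn1 : (1:ℝ) ≤ n := by exact_mod_cast hn.trans' (by norm_num)
  have hlog : 0 ≤ Real.log n := Real.log_nonneg hn1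
  have hp0 : 0 ≤ p := by positivity
  have hw : ∀ ω : Pairs n → Bool, 0 ≤ graphWeight n p ω := graphWeight_nonneg hp0 hp1
  have ht0 : 0 ≤ t := by positivity
  -- per-vertex bound
  have vertex : ∀ k : Fin n,
      ∑ ω ∈ (Finset.univ : Finset (Pairs n → Bool)).filter
          (fun ω => t ≤ (deg ω k : ℝ)), graphWeight n p ω
        ≤ (2:ℝ) ^ (-t) * (1 + p) ^ n := by
    intro k
    have step1 : ∑ ω ∈ (Finset.univ : Finset (Pairs n → Bool)).filter
          (fun ω => t ≤ (deg ω k : ℝ)), graphWeight n p ω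
        ≤ ∑ ω ∈ (Finset.univ : Finset (Pairs n → Bool)).filter
          (fun ω => t ≤ (deg ω k : ℝ)),
            (2:ℝ) ^ (-t) * (graphWeight n p ω * 2 ^ (deg ω k)) := by
      apply Finset.sum_le_sum
      intro ω hω
      simp only [Finset.mem_filter] at hω
      have h2 : (2:ℝ) ^ (t) ≤ (2:ℝ) ^ ((deg ω k : ℝ)) :=
        Real.rpow_le_rpow_of_exponent_le (by norm_num) hω.2
      have h3 : (2:ℝ) ^ ((deg ω k : ℝ)) = (2:ℝ) ^ (deg ω k) := Real.rpow_natCast 2 _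
      have h4 : (1:ℝ) ≤ (2:ℝ) ^ (-t) * 2 ^ (deg ω k) := by
        rw [← h3]
        rw [← Real.rpow_add (by norm_num)]
        calc (1:ℝ) = (2:ℝ) ^ (0:ℝ) := (Real.rpow_zero 2).symm
          _ ≤ _ := Real.rpow_le_rpow_of_exponent_le (by norm_num) (by linarith)
      calc graphWeight n p ω = graphWeight n p ω * 1 := (mul_one _).symm
        _ ≤ graphWeight n p ω * ((2:ℝ) ^ (-t) * 2 ^ (deg ω k)) :=
            mul_le_mul_of_nonneg_left h4 (hw ω)
        _ = (2:ℝ) ^ (-t) * (graphWeight n p ω * 2 ^ (deg ω k)) := by ring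
    have step2 : ∑ ω ∈ (Finset.univ : Finset (Pairs n → Bool)).filter
          (fun ω => t ≤ (deg ω k : ℝ)),
            (2:ℝ) ^ (-t) * (graphWeight n p ω * 2 ^ (deg ω k))
        ≤ ∑ ω : Pairs n → Bool, (2:ℝ) ^ (-t) * (graphWeight n p ω * 2 ^ (deg ω k)) := by
      apply Finset.sum_le_sum_of_subset_of_nonneg (Finset.filter_subset _ _)
      intro ω _ _
      have := hw ω
      positivity
    have step3 : ∑ ω : Pairs n → Bool, (2:ℝ) ^ (-t) * (graphWeight n p ω * 2 ^ (deg ω k))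
        = (2:ℝ) ^ (-t) * ∏ e : Pairs n, (if touch k e then 1 + p else 1) := by
      rw [← Finset.mul_sum, moment_eq]
    have step4 : ∏ e : Pairs n, (if touch k e then 1 + p else 1) ≤ (1 + p) ^ n := by
      calc ∏ e : Pairs n, (if touch k e then 1 + p else 1)
          = (1 + p) ^ (Finset.univ.filter (fun e : Pairs n => touch k e)).card := by
            rw [← Finset.prod_const, Finset.prod_filter]
        _ ≤ (1 + p) ^ n := pow_le_pow_right₀ (by linarith) (card_touch_le k)
    calc _ ≤ _ := step1
      _ ≤ _ := step2
      _ = _ := step3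
      _ ≤ (2:ℝ) ^ (-t) * (1 + p) ^ n :=
          mul_le_mul_of_nonneg_left step4 (by positivity)
  -- union bound
  have subset : (Finset.univ : Finset (Pairs n → Bool)).filter
        (fun ω => t ≤ (maxDeg ω : ℝ))
      ⊆ Finset.univ.biUnion (fun k : Fin n =>
        (Finset.univ : Finset (Pairs n → Bool)).filter (fun ω => t ≤ (deg ω k : ℝ))) := by
    intro ω hω
    simp only [Finset.mem_filter, Finset.mem_univ, true_and] at hω
    have hnonempty : Nonempty (Fin n) := ⟨⟨0, by omega⟩⟩
    obtain ⟨k, _, hk⟩ := Finset.exists_mem_eq_sup (Finset.univ : Finset (Fin n))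
      Finset.univ_nonempty (deg ω)
    simp only [Finset.mem_biUnion, Finset.mem_filter, Finset.mem_univ, true_and]
    exact ⟨k, by rw [maxDeg] at hω; rw [← hk]; exact hω⟩
  have union : ∑ ω ∈ (Finset.univ : Finset (Pairs n → Bool)).filter
        (fun ω => t ≤ (maxDeg ω : ℝ)), graphWeight n p ω
      ≤ (n : ℝ) * ((2:ℝ) ^ (-t) * (1 + p) ^ n) := by
    calc ∑ ω ∈ (Finset.univ : Finset (Pairs n → Bool)).filter
          (fun ω => t ≤ (maxDeg ω : ℝ)), graphWeight n p ω
        ≤ ∑ ω ∈ Finset.univ.biUnion (fun k : Fin n =>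
            (Finset.univ : Finset (Pairs n → Bool)).filter
              (fun ω => t ≤ (deg ω k : ℝ))), graphWeight n p ω :=
          Finset.sum_le_sum_of_subset_of_nonneg subset (fun ω _ _ => hw ω)
      _ ≤ ∑ k : Fin n, ∑ ω ∈ (Finset.univ : Finset (Pairs n → Bool)).filter
            (fun ω => t ≤ (deg ω k : ℝ)), graphWeight n p ω :=
          sum_biUnion_le_nonneg _ hw _ _
      _ ≤ ∑ _k : Fin n, (2:ℝ) ^ (-t) * (1 + p) ^ n :=
          Finset.sum_le_sum (fun k _ => vertex k)
      _ = (n : ℝ) * ((2:ℝ) ^ (-t) * (1 + p) ^ n) := by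
          rw [Finset.sum_const, Finset.card_univ, Fintype.card_fin, nsmul_eq_mul]
  -- numerics
  have hpn : p * n = γ * Real.log n := by
    rw [hp, div_mul_cancel₀ _ hn0.ne']
  have h1p : (1 + p) ^ n ≤ Real.exp (γ * Real.log n) := by
    calc (1 + p) ^ n ≤ (Real.exp p) ^ n := by
          apply pow_le_pow_left₀ (by linarith)
          linarith [Real.add_one_le_exp p]
      _ = Real.exp (p * n) := by rw [← Real.exp_nat_mul]; ring_nf
      _ = Real.exp (γ * Real.log n) := by rw [hpn]
  have h2t : (2:ℝ) ^ (-t) = Real.exp (-(t * Real.log 2)) := by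
    rw [Real.rpow_def_of_pos (by norm_num : (0:ℝ) < 2)]
    exact Real.exp_eq_exp.mpr (by ring)
  have hfinal : (n : ℝ) * ((2:ℝ) ^ (-t) * (1 + p) ^ n) ≤ (n : ℝ) ^ ((1:ℝ) - γ / 4) := by
    have hexp : (n : ℝ) * ((2:ℝ) ^ (-t) * (1 + p) ^ n)
        ≤ Real.exp (Real.log n * (1 + γ - 2 * γ * Real.log 2)) := by
      have hn' : (n : ℝ) = Real.exp (Real.log n) := (Real.exp_log hn0).symm
      calc (n : ℝ) * ((2:ℝ) ^ (-t) * (1 + p) ^ n)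
          ≤ (n : ℝ) * (Real.exp (-(t * Real.log 2)) * Real.exp (γ * Real.log n)) := by
            rw [h2t]
            apply mul_le_mul_of_nonneg_left _ hn0.le
            apply mul_le_mul_of_nonneg_left h1p (Real.exp_pos _).le
        _ = Real.exp (Real.log n + (-(t * Real.log 2) + γ * Real.log n)) := by
            rw [Real.exp_add, Real.exp_add, ← hn']
        _ = Real.exp (Real.log n * (1 + γ - 2 * γ * Real.log 2)) :=
            Real.exp_eq_exp.mpr (by rw [ht]; ring)
    have hrpow : (n : ℝ) ^ ((1:ℝ) + γ - 2 * γ * Real.log 2)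
        = Real.exp (Real.log n * (1 + γ - 2 * γ * Real.log 2)) :=
      Real.rpow_def_of_pos hn0 _
    have hexpo : (1:ℝ) + γ - 2 * γ * Real.log 2 ≤ 1 - γ / 4 := expo_aux hγ
    calc (n : ℝ) * ((2:ℝ) ^ (-t) * (1 + p) ^ n)
        ≤ (n : ℝ) ^ ((1:ℝ) + γ - 2 * γ * Real.log 2) := by rw [hrpow]; exact hexp
      _ ≤ (n : ℝ) ^ ((1:ℝ) - γ / 4) := Real.rpow_le_rpow_of_exponent_le hn1 hexpo
  exact union.trans hfinal

end
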